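/- Let n ≥ 2 be an integer and m > n a real number. Let A be a symmetric real n×n matrix and let T = trace(A). Then ∑_{i,j=1}^n A_{ij}² − ∑_{j=1}^n A_{1j}² ≥ (1/(m−1)) · ∑_{j=1}^n A_{1j}² − T²/(m−n). -/

import Mathlib

open Finset

/-- Pointwise algebraic core of the Bochner-type inequality (Lemma 2.1):
for a symmetric `n × n` real matrix `A` (`n ≥ 2`) with trace `T` and any real `m > n`,
`∑_{i,j} A_{ij}² − ∑_j A_{1j}² ≥ (1/(m−1))·∑_j A_{1j}² − T²/(m−n)`. -/
theorem bochner_algebraic_core (n : ℕ) (hn : 2 ≤ n) (m : ℝ) (hm : (n : ℝ) < m)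
    (A : Matrix (Fin n) (Fin n) ℝ) (hA : A.IsSymm) :
    (∑ i : Fin n, ∑ j : Fin n, (A i j) ^ 2) - ∑ j : Fin n, (A ⟨0, by omega⟩ j) ^ 2 ≥
      (1 / (m - 1)) * ∑ j : Fin n, (A ⟨0, by omega⟩ j) ^ 2 - (Matrix.trace A) ^ 2 / (m - n) := by
  set e0 : Fin n := ⟨0, by omega⟩ with he0
  set a : ℝ := A e0 e0 with ha
  set S : ℝ := ∑ j, A e0 j ^ 2 with hS
  set T : ℝ := Matrix.trace A with hT
  have hsymm : ∀ i j, A i j = A j i := fun i j => by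
    have := congrFun (congrFun hA i) j
    simpa [Matrix.transpose_apply] using this.symm
  have hScard : (univ.erase e0).card = n - 1 := by
    simp [Finset.card_erase_of_mem]
  -- a² ≤ S
  have haS : a ^ 2 ≤ S := by
    exact Finset.single_le_sum (f := fun j => A e0 j ^ 2) (fun j _ => sq_nonneg _)
      (Finset.mem_univ e0)
  -- off-diagonal sum bound
  have hrow : ∀ i ∈ univ.erase e0, A i e0 ^ 2 + A i i ^ 2 ≤ ∑ j, A i j ^ 2 := by
    intro i hi
    have hne : e0 ≠ i := (Finset.ne_of_mem_erase hi).symm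
    have : ∑ j ∈ ({e0, i} : Finset (Fin n)), A i j ^ 2 ≤ ∑ j, A i j ^ 2 :=
      Finset.sum_le_sum_of_subset_of_nonneg (Finset.subset_univ _)
        (fun j _ _ => sq_nonneg _)
    simpa [Finset.sum_pair hne] using this
  have hQ : S + ∑ i ∈ univ.erase e0, (A i e0 ^ 2 + A i i ^ 2) ≤
      ∑ i : Fin n, ∑ j : Fin n, (A i j) ^ 2 := by
    have := Finset.add_sum_erase univ (fun i => ∑ j, A i j ^ 2) (Finset.mem_univ e0)
    rw [← this]
    exact add_le_add le_rfl (Finset.sum_le_sum hrow)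
  have hcol : ∑ i ∈ univ.erase e0, A i e0 ^ 2 = S - a ^ 2 := by
    have : ∑ i ∈ univ.erase e0, A i e0 ^ 2 = ∑ i ∈ univ.erase e0, A e0 i ^ 2 := by
      refine Finset.sum_congr rfl fun i _ => by rw [hsymm]
    rw [this, hS, ha, Finset.sum_erase_eq_sub (Finset.mem_univ e0)]
  have htr : ∑ i ∈ univ.erase e0, A i i = T - a := by
    rw [hT, Matrix.trace, ha, Finset.sum_erase_eq_sub (Finset.mem_univ e0)]
    rfl
  have hcs : (T - a) ^ 2 ≤ ((n : ℝ) - 1) * ∑ i ∈ univ.erase e0, (A i i) ^ 2 := by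
    have := sq_sum_le_card_mul_sum_sq (s := univ.erase e0) (f := fun i => A i i)
    rw [htr] at this
    have hc : ((univ.erase e0).card : ℝ) = (n : ℝ) - 1 := by
      rw [hScard, Nat.cast_sub (by omega : 1 ≤ n), Nat.cast_one]
    rw [hc] at this
    exact this
  set D : ℝ := ∑ i ∈ univ.erase e0, (A i i) ^ 2 with hD
  have hQ2 : S + (S - a ^ 2) + D ≤ ∑ i : Fin n, ∑ j : Fin n, (A i j) ^ 2 := by
    rw [Finset.sum_add_distrib, hcol] at hQ
    linarith
  have hn1 : (1 : ℝ) ≤ (n : ℝ) - 1 := by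
    have : (2 : ℝ) ≤ (n : ℝ) := by exact_mod_cast hn
    linarith
  have hmn : 0 < m - n := by linarith
  have hm1 : 0 < m - 1 := by linarith
  have hkey : a ^ 2 / (m - 1) ≤ (T - a) ^ 2 / ((n : ℝ) - 1) + T ^ 2 / (m - n) := by
    rw [div_add_div _ _ (by linarith) (by linarith), div_le_div_iff₀ hm1 (by positivity)]
    nlinarith [sq_nonneg ((a - T) * (m - n) - T * ((n:ℝ) - 1)), hmn.le, hm1.le,
      sq_nonneg (a - T), sq_nonneg T]
  have hDge : (T - a) ^ 2 / ((n : ℝ) - 1) ≤ D := by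
    rw [div_le_iff₀ (by linarith)]
    nlinarith
  have h2 : S / (m - 1) ≤ (S - a ^ 2) + a ^ 2 / (m - 1) := by
    have hd := div_le_self (by linarith : (0:ℝ) ≤ S - a ^ 2) (by linarith : (1:ℝ) ≤ m - 1)
    have heq : S / (m - 1) = (S - a ^ 2) / (m - 1) + a ^ 2 / (m - 1) := by ring
    linarith
  have h1 : (1 / (m - 1)) * S = S / (m - 1) := by ring
  rw [ge_iff_le, sub_le_sub_iff, h1]
  linarith
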